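/- arXiv:math/9906106 — 2 statements merged into one kernel-verified Lean document; each statement's English description precedes it below -/
import Mathlib

section
/- Let a : ℝⁿ \ {0} → A be a continuous map into a unital C*-algebra A such that each a(ξ) is self-adjoint and invertible, and a is homogeneous of degree m ≥ 1, i.e., a(tξ) = tᵐ a(ξ) for all t > 0. Then the function ξ ↦ ‖(a(ξ) + i·1)⁻¹‖ tends to 0 as ‖ξ‖ → ∞. -/
open Complex

/-- If `a : ℝⁿ \ {0} → A` is continuous, takes self-adjoint invertible values, and is
homogeneous of degree `m ≥ 1`, then `‖(a(ξ) + i)⁻¹‖ → 0` as `‖ξ‖ → ∞`. -/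
theorem stmt12 {A : Type*} [CStarAlgebra A] {n : ℕ}
    (a : EuclideanSpace ℝ (Fin n) → A)
    (hcont : ContinuousOn a {ξ : EuclideanSpace ℝ (Fin n) | ξ ≠ 0})
    (hsa : ∀ ξ : EuclideanSpace ℝ (Fin n), ξ ≠ 0 → IsSelfAdjoint (a ξ))
    (hinv : ∀ ξ : EuclideanSpace ℝ (Fin n), ξ ≠ 0 → IsUnit (a ξ))
    (m : ℕ) (hm : 1 ≤ m)
    (hhom : ∀ t : ℝ, 0 < t → ∀ ξ : EuclideanSpace ℝ (Fin n), ξ ≠ 0 →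
      a (t • ξ) = (t ^ m : ℝ) • a ξ) :
    Filter.Tendsto (fun ξ : EuclideanSpace ℝ (Fin n) => ‖Ring.inverse (a ξ + I • (1 : A))‖)
      (Filter.comap norm Filter.atTop) (nhds 0) := by
  classical
  rcases subsingleton_or_nontrivial A with hA | hA
  · have : ∀ ξ : EuclideanSpace ℝ (Fin n), ‖Ring.inverse (a ξ + I • (1 : A))‖ = 0 := by
      intro ξ; rw [Subsingleton.elim (Ring.inverse (a ξ + I • (1 : A))) 0, norm_zero]
    simpa [this] using tendsto_const_nhds
  set S : Set (EuclideanSpace ℝ (Fin n)) := Metric.sphere 0 1 with hS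
  -- the sphere is contained in the nonzero vectors
  have hSsub : S ⊆ {ξ : EuclideanSpace ℝ (Fin n) | ξ ≠ 0} := by
    intro η hη h
    rw [h, hS, mem_sphere_iff_norm] at hη
    simp at hη
  -- continuity of the inverse on the sphere
  have hcontinv : ContinuousOn (fun η => Ring.inverse (a η)) S := by
    intro η hη
    have h1 : ContinuousWithinAt a S η := (hcont η (hSsub hη)).mono hSsub
    have h2 : ContinuousAt Ring.inverse (a η) := by
      simpa [IsUnit.unit_spec] using NormedRing.inverse_continuousAt (hinv η (hSsub hη)).unit
    exact h2.comp_continuousWithinAt h1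
  -- uniform bound on the inverses over the sphere
  obtain ⟨C, hC⟩ := (isCompact_sphere (0 : EuclideanSpace ℝ (Fin n))
    1).exists_bound_of_continuousOn hcontinv
  set M : ℝ := max C 1 with hM
  have hM1 : (1 : ℝ) ≤ M := le_max_right _ _
  have hM0 : (0 : ℝ) < M := lt_of_lt_of_le one_pos hM1
  have hCM : ∀ η ∈ S, ‖Ring.inverse (a η)‖ ≤ M := fun η hη =>
    (hC η hη).trans (le_max_left _ _)
  -- the key pointwise bound for ‖ξ‖ ≥ 1
  have key : ∀ ξ : EuclideanSpace ℝ (Fin n), 1 ≤ ‖ξ‖ →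
      ‖Ring.inverse (a ξ + I • (1 : A))‖ ≤ M / ‖ξ‖ ^ m := by
    intro ξ hξ1
    have ht0 : (0 : ℝ) < ‖ξ‖ := lt_of_lt_of_le one_pos hξ1
    have htm0 : (0 : ℝ) < ‖ξ‖ ^ m := pow_pos ht0 m
    have hξ0 : ξ ≠ 0 := by
      intro h
      rw [h, norm_zero] at hξ1
      linarith
    set η : EuclideanSpace ℝ (Fin n) := ‖ξ‖⁻¹ • ξ with hη
    have hηnorm : ‖η‖ = 1 := by
      rw [hη, norm_smul, norm_inv, Real.norm_eq_abs, abs_of_pos ht0,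
        inv_mul_cancel₀ ht0.ne']
    have hηS : η ∈ S := by rw [hS, mem_sphere_iff_norm]; simpa using hηnorm
    have hη0 : η ≠ 0 := hSsub hηS
    have haξ : a ξ = (‖ξ‖ ^ m : ℝ) • a η := by
      have := hhom ‖ξ‖ ht0 η hη0
      rwa [hη, smul_inv_smul₀ ht0.ne'] at this
    -- a ξ is a unit with explicit inverse
    have hbinv : a ξ * ((‖ξ‖ ^ m)⁻¹ • Ring.inverse (a η)) = 1 := by
      rw [haξ, smul_mul_smul_comm, mul_inv_cancel₀ htm0.ne',
        Ring.mul_inverse_cancel _ (hinv η hη0), one_smul]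
    have hbinv' : ((‖ξ‖ ^ m)⁻¹ • Ring.inverse (a η)) * a ξ = 1 := by
      rw [haξ, smul_mul_smul_comm, inv_mul_cancel₀ htm0.ne',
        Ring.inverse_mul_cancel _ (hinv η hη0), one_smul]
    set u : Aˣ := ⟨a ξ, (‖ξ‖ ^ m)⁻¹ • Ring.inverse (a η), hbinv, hbinv'⟩ with hu
    have huinv : ‖(↑u⁻¹ : A)‖ ≤ (‖ξ‖ ^ m)⁻¹ * M := by
      show ‖(‖ξ‖ ^ m)⁻¹ • Ring.inverse (a η)‖ ≤ (‖ξ‖ ^ m)⁻¹ * M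
      rw [norm_smul, norm_inv, Real.norm_eq_abs, abs_of_pos htm0]
      exact mul_le_mul_of_nonneg_left (hCM η hηS) (inv_nonneg.2 htm0.le)
    -- spectral lower bound
    have hspec : ∀ z : ℂ, z ∈ spectrum ℂ (a ξ) → ‖ξ‖ ^ m / M ≤ ‖z‖ := by
      intro z hz
      have hz0 : z ≠ 0 := by
        intro h
        exact spectrum.zero_notMem ℂ u.isUnit (h ▸ hz)
      have hz' : (z⁻¹ : ℂ) ∈ spectrum ℂ ((↑u⁻¹ : A)) := by
        have h2 := (spectrum.inv_mem_iff (r := Units.mk0 z hz0) (a := u)).mp (by simpa using hz)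
        simpa using h2
      have hnorm : ‖z⁻¹‖ ≤ ‖(↑u⁻¹ : A)‖ := spectrum.norm_le_norm_of_mem hz'
      have h1 : ‖z‖⁻¹ ≤ (‖ξ‖ ^ m)⁻¹ * M := by
        rw [← norm_inv]; exact hnorm.trans huinv
      have hzpos : 0 < ‖z‖ := norm_pos_iff.2 hz0
      rw [div_le_iff₀ hM0]
      calc ‖ξ‖ ^ m = ‖ξ‖ ^ m * (‖z‖⁻¹ * ‖z‖) := by rw [inv_mul_cancel₀ hzpos.ne']; ring
        _ ≤ ‖ξ‖ ^ m * (((‖ξ‖ ^ m)⁻¹ * M) * ‖z‖) :=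
            mul_le_mul_of_nonneg_left (mul_le_mul_of_nonneg_right h1 hzpos.le) htm0.le
        _ = ‖z‖ * M := by field_simp
    -- selfadjointness data
    have hsaξ : IsSelfAdjoint (a ξ) := hsa ξ hξ0
    have hnormal : IsStarNormal (a ξ) := hsaξ.isStarNormal
    -- z + I is nonzero on the spectrum
    have hne : ∀ z ∈ spectrum ℂ (a ξ), z + I ≠ 0 := by
      intro z hz h
      have hre : z = (z.re : ℂ) := hsaξ.mem_spectrum_eq_re hz
      have him : (z + I).im = 1 := by rw [hre]; simp
      rw [h] at him
      simp at him
    have hcf : ContinuousOn (fun z : ℂ => (z + I)⁻¹) (spectrum ℂ (a ξ)) :=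
      ContinuousOn.inv₀ (by fun_prop) hne
    -- express the resolvent via the continuous functional calculus
    have hrepr : Ring.inverse (a ξ + I • (1 : A)) =
        cfc (fun z : ℂ => (z + I)⁻¹) (a ξ) := by
      have h1 : cfc (fun z : ℂ => z + I) (a ξ) = a ξ + I • (1 : A) := by
        rw [cfc_add_const I (fun z : ℂ => z) (a ξ), cfc_id' ℂ (a ξ),
          Algebra.algebraMap_eq_smul_one]
      rw [← h1, ← cfc_inv (fun z : ℂ => z + I) (a ξ) hne]
    rw [hrepr]
    -- bound the norm of the cfc
    apply norm_cfc_le (div_nonneg hM0.le htm0.le)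
    intro z hz
    have hre : z = (z.re : ℂ) := hsaξ.mem_spectrum_eq_re hz
    have habs : ‖z‖ ≤ ‖z + I‖ := by
      have h1 : |(z + I).re| ≤ ‖z + I‖ := Complex.abs_re_le_norm _
      have h2 : (z + I).re = z.re := by simp
      have h3 : ‖z‖ = |z.re| := by rw [hre]; simp
      rw [h3, ← h2]
      exact h1
    have hz0 : ‖ξ‖ ^ m / M ≤ ‖z‖ := hspec z hz
    have hzpos : 0 < ‖z‖ := lt_of_lt_of_le (div_pos htm0 hM0) hz0
    rw [norm_inv]
    calc ‖z + I‖⁻¹ ≤ ‖z‖⁻¹ := inv_anti₀ hzpos habs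
      _ ≤ (‖ξ‖ ^ m / M)⁻¹ := inv_anti₀ (div_pos htm0 hM0) hz0
      _ = M / ‖ξ‖ ^ m := by rw [inv_div]
  -- conclude by squeezing
  have hnormt : Filter.Tendsto (fun ξ : EuclideanSpace ℝ (Fin n) => ‖ξ‖)
      (Filter.comap norm Filter.atTop) Filter.atTop := Filter.tendsto_comap
  have hg : Filter.Tendsto (fun ξ : EuclideanSpace ℝ (Fin n) => M / ‖ξ‖ ^ m)
      (Filter.comap norm Filter.atTop) (nhds 0) :=
    Filter.Tendsto.div_atTop tendsto_const_nhds
      ((Filter.tendsto_pow_atTop (Nat.one_le_iff_ne_zero.mp hm)).comp hnormt)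
  refine squeeze_zero' (Filter.Eventually.of_forall fun ξ => norm_nonneg _) ?_ hg
  filter_upwards [hnormt.eventually (Filter.eventually_ge_atTop 1)] with ξ hξ
  exact key ξ hξ
end

section
/- Let A be a unital C*-algebra, ε a self-adjoint unitary in A, and D ∈ A self-adjoint with εD = -Dε. For t ≥ 0 set 𝔻_t = [[D, tε],[tε, D]] ∈ M₂(A). Then for every f ∈ C₀(ℝ), the map t ↦ f(𝔻_t) is norm-continuous and ‖f(𝔻_t)‖ → 0 as t → ∞. -/
open ZeroAtInfty

open Polynomial in
lemma auxCont {B : Type*} [CStarAlgebra B] (a : ℝ → B) (hc : Continuous a)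
    (hsa : ∀ t, IsSelfAdjoint (a t)) (g : ℂ → ℂ) (hg : Continuous g) :
    Continuous fun t => cfc g (a t) := by
  rcases subsingleton_or_nontrivial B with hB | hB
  · exact continuous_of_const fun _ _ => Subsingleton.elim _ _
  rw [continuous_iff_continuousAt]
  intro t₀
  rw [ContinuousAt, Metric.tendsto_nhds]
  intro δ hδ
  set M : ℝ := ‖a t₀‖ + 1 with hM
  obtain ⟨p, hp⟩ := exists_polynomial_near_of_continuousOn (-M) M (fun x : ℝ => (g x).re)
    (Continuous.continuousOn (by fun_prop)) (δ/6) (by positivity)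
  obtain ⟨q, hq⟩ := exists_polynomial_near_of_continuousOn (-M) M (fun x : ℝ => (g x).im)
    (Continuous.continuousOn (by fun_prop)) (δ/6) (by positivity)
  set P : ℂ[X] := p.map (algebraMap ℝ ℂ) + C Complex.I * q.map (algebraMap ℝ ℂ) with hP
  have hPeval : ∀ x : ℝ, P.eval (x : ℂ) = ((p.eval x : ℝ) : ℂ) + Complex.I * ((q.eval x : ℝ) : ℂ) := by
    intro x
    simp [hP, eval_map, ← Complex.coe_algebraMap, eval₂_at_apply]
  have key : ∀ t : ℝ, ‖a t‖ ≤ M → ‖cfc g (a t) - aeval (a t) P‖ ≤ δ/3 := by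
    intro t ht
    have hsn : IsStarNormal (a t) := (hsa t).isStarNormal
    rw [← cfc_polynomial P (a t), ← cfc_sub g P.eval (a t) hg.continuousOn
      P.continuousOn]
    refine norm_cfc_le (by positivity) fun x hx => ?_
    have hxre : x = x.re := (hsa t).mem_spectrum_eq_re hx
    have hxM : |x.re| ≤ M := by
      have h1 : ‖x‖ ≤ ‖a t‖ := spectrum.norm_le_norm_of_mem hx
      have h2 : |x.re| ≤ ‖x‖ := Complex.abs_re_le_norm x
      linarith
    have hpx := hp x.re ⟨by cases abs_le.mp hxM; linarith, (abs_le.mp hxM).2⟩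
    have hqx := hq x.re ⟨(abs_le.mp hxM).1, (abs_le.mp hxM).2⟩
    rw [hxre, hPeval]
    set gr : ℝ := (g x.re).re with hgr
    set gi : ℝ := (g x.re).im with hgi
    have hgx : g x.re = (gr : ℂ) + (gi : ℂ) * Complex.I := (Complex.re_add_im _).symm
    calc ‖g x.re - (((p.eval x.re : ℝ) : ℂ) + Complex.I * ((q.eval x.re : ℝ) : ℂ))‖
        = ‖((gr - p.eval x.re : ℝ) : ℂ) + ((gi - q.eval x.re : ℝ) : ℂ) * Complex.I‖ := by
          rw [hgx]; congr 1; push_cast; ring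
      _ ≤ ‖((gr - p.eval x.re : ℝ) : ℂ)‖ + ‖((gi - q.eval x.re : ℝ) : ℂ) * Complex.I‖ :=
          norm_add_le _ _
      _ = |gr - p.eval x.re| + |gi - q.eval x.re| := by
          simp [norm_mul, Complex.norm_I, Real.norm_eq_abs, ← Complex.ofReal_sub, Complex.norm_real]
      _ ≤ δ/3 := by rw [abs_sub_comm, abs_sub_comm gi]; linarith
  have hk : Continuous fun t => aeval (a t) P := P.continuous_aeval.comp hc
  have h1 : ∀ᶠ t in nhds t₀, ‖a t‖ ≤ M :=
    ((hc.norm.continuousAt (x := t₀)).eventually_lt_const (by simp [hM])).mono fun _ h => h.le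
  have h2 : ∀ᶠ t in nhds t₀, ‖aeval (a t) P - aeval (a t₀) P‖ < δ/3 := by
    have h0 : Filter.Tendsto (fun t => ‖aeval (a t) P - aeval (a t₀) P‖) (nhds t₀) (nhds 0) := by
      have := ((hk.tendsto t₀).sub_const (aeval (a t₀) P)).norm
      simpa using this
    exact h0.eventually_lt_const (by positivity)
  filter_upwards [h1, h2] with t ht1 ht2
  have e1 := key t ht1
  have e2 := key t₀ (by simp only [hM]; linarith)
  rw [dist_eq_norm]
  calc ‖cfc g (a t) - cfc g (a t₀)‖
      = ‖(cfc g (a t) - aeval (a t) P) + (aeval (a t) P - aeval (a t₀) P)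
          + (aeval (a t₀) P - cfc g (a t₀))‖ := by congr 1; abel
    _ ≤ ‖cfc g (a t) - aeval (a t) P‖ + ‖aeval (a t) P - aeval (a t₀) P‖
          + ‖aeval (a t₀) P - cfc g (a t₀)‖ := norm_add₃_le
    _ < δ := by rw [norm_sub_rev (aeval (a t₀) P)]; linarith

/-- Let `ε` be a self-adjoint unitary and `D` a self-adjoint element of a unital
C*-algebra `A` with `εD = -Dε`, and for `t ≥ 0` let `𝔻_t = [[D, tε], [tε, D]] ∈ M₂(A)`
(realized in a C*-algebra `B` via an injective unital `*`-homomorphism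
`ψ : M₂(A) → B`, which endows `M₂(A)` with its C*-norm). Then for every `f ∈ C₀(ℝ)`
the map `t ↦ f(𝔻_t)` is norm-continuous and `‖f(𝔻_t)‖ → 0` as `t → ∞`. -/
theorem stmt19 {A B : Type*} [CStarAlgebra A] [CStarAlgebra B]
    (ψ : Matrix (Fin 2) (Fin 2) A →⋆ₐ[ℂ] B) (hψ : Function.Injective ψ)
    (ε D : A) (hε_sa : star ε = ε) (hε_sq : ε ^ 2 = 1)
    (hD : IsSelfAdjoint D) (hanti : ε * D = -(D * ε)) (f : C₀(ℝ, ℂ)) :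
    ContinuousOn (fun t : ℝ => cfc (fun z : ℂ => f z.re) (ψ !![D, t • ε; t • ε, D]))
      (Set.Ici 0) ∧
    Filter.Tendsto (fun t : ℝ => ‖cfc (fun z : ℂ => f z.re) (ψ !![D, t • ε; t • ε, D])‖)
      Filter.atTop (nhds 0) := by
  set g : ℂ → ℂ := fun z => f z.re with hgdef
  have hg : Continuous g := (map_continuous f).comp Complex.continuous_re
  set a : ℝ → B := fun t => ψ !![D, t • ε; t • ε, D] with hadef
  -- decomposition
  have hmat : ∀ t : ℝ, (!![D, t • ε; t • ε, D] : Matrix (Fin 2) (Fin 2) A)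
      = !![D, 0; 0, D] + (t : ℂ) • !![0, ε; ε, 0] := by
    intro t
    have : ∀ x : A, (t : ℂ) • x = t • x := fun x => algebraMap_smul ℂ t x
    ext i j
    fin_cases i <;> fin_cases j <;>
      simp [Matrix.add_apply, Matrix.smul_apply, this]
  have ha_cont : Continuous a := by
    have : a = fun t : ℝ => ψ !![D, 0; 0, D] + (t : ℂ) • ψ !![0, ε; ε, 0] := by
      funext t
      rw [hadef]
      simp only [hmat t, map_add, map_smul]
    rw [this]
    exact continuous_const.add ((Complex.continuous_ofReal.smul continuous_const))
  -- selfadjointness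
  have hsa : ∀ t : ℝ, IsSelfAdjoint (a t) := by
    intro t
    have hm : star (!![D, t • ε; t • ε, D] : Matrix (Fin 2) (Fin 2) A)
        = !![D, t • ε; t • ε, D] := by
      ext i j
      rw [Matrix.star_apply]
      fin_cases i <;> fin_cases j <;> simp [hε_sa, hD.star_eq, star_smul]
    rw [IsSelfAdjoint, hadef]
    simp only [← map_star, hm]
  -- the square
  set c₀ : B := ψ !![D, 0; 0, D] with hc₀
  have hc₀sa : IsSelfAdjoint c₀ := by
    have hm : star (!![D, 0; 0, D] : Matrix (Fin 2) (Fin 2) A) = !![D, 0; 0, D] := by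
      ext i j
      rw [Matrix.star_apply]
      fin_cases i <;> fin_cases j <;> simp [hD.star_eq]
    rw [IsSelfAdjoint, hc₀, ← map_star, hm]
  have hsq : ∀ t : ℝ, (a t) ^ 2 = c₀ ^ 2 + algebraMap ℂ B ((t : ℂ) ^ 2) := by
    intro t
    have hεε : ε * ε = 1 := by rw [← sq]; exact hε_sq
    have hts : ∀ x : A, ((t : ℂ) ^ 2) • x = (t * t) • x := fun x => by
      rw [sq, ← Complex.ofReal_mul]; exact algebraMap_smul ℂ (t * t) x
    have hm : (!![D, t • ε; t • ε, D] : Matrix (Fin 2) (Fin 2) A) *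
        !![D, t • ε; t • ε, D]
        = !![D, 0; 0, D] * !![D, 0; 0, D] + ((t : ℂ) ^ 2) • 1 := by
      have h1 : (t • ε) * (t • ε) = (t * t) • (1 : A) := by
        rw [smul_mul_smul_comm, hεε]
      have h2 : t • (D * ε) + t • (ε * D) = 0 := by
        rw [← smul_add, hanti]; simp
      have h3 : t • (ε * D) + t • (D * ε) = 0 := by
        rw [add_comm]; exact h2
      rw [Matrix.mul_fin_two, Matrix.mul_fin_two]
      ext i j
      fin_cases i <;> fin_cases j <;>
        simp [Matrix.add_apply, Matrix.smul_apply, h1, h2, h3, hts, Matrix.one_apply,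
          add_comm]
    have : (a t) ^ 2 = ψ (!![D, t • ε; t • ε, D] * !![D, t • ε; t • ε, D]) := by
      rw [hadef, map_mul, sq]
    rw [this, hm, map_add, map_mul, map_smul, map_one, Algebra.algebraMap_eq_smul_one,
      pow_two c₀, hc₀]
  -- spectrum bound
  have hspec : ∀ t : ℝ, 0 ≤ t → ∀ x ∈ spectrum ℂ (a t), t ≤ |x.re| := by
    intro t ht x hx
    have hx2 : x ^ 2 ∈ spectrum ℂ ((a t) ^ 2) :=
      spectrum.pow_image_subset (a t) 2 ⟨x, hx, rfl⟩
    rw [hsq t, ← spectrum.add_singleton_eq] at hx2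
    obtain ⟨v, hv, u, hu, huv⟩ := Set.mem_add.mp hx2
    rw [Set.mem_singleton_iff] at hu
    rw [spectrum.map_pow_of_pos c₀ two_pos] at hv
    obtain ⟨w, hw, rfl⟩ := hv
    have hwre : w = w.re := hc₀sa.mem_spectrum_eq_re hw
    have hxre : x = x.re := (hsa t).mem_spectrum_eq_re hx
    have h2 : (x.re : ℂ) ^ 2 = ((t : ℝ) : ℂ) ^ 2 + ((w.re : ℝ) : ℂ) ^ 2 := by
      rw [← hxre, ← hwre, ← huv, hu]; ring
    have heq : x.re ^ 2 = t ^ 2 + w.re ^ 2 := by exact_mod_cast h2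
    nlinarith [abs_nonneg x.re, sq_abs x.re, sq_nonneg w.re]
  constructor
  · exact (auxCont a ha_cont hsa g hg).continuousOn
  · rw [Metric.tendsto_nhds]
    intro δ hδ
    have hzero : Filter.Tendsto f (Filter.cocompact ℝ) (nhds 0) := zero_at_infty f
    have hev : ∀ᶠ s : ℝ in Filter.cocompact ℝ, ‖f s‖ < δ / 2 := by
      have := Metric.tendsto_nhds.mp hzero (δ / 2) (by positivity)
      simpa [dist_zero_right] using this
    rw [cocompact_eq_atBot_atTop, Filter.eventually_sup] at hev
    obtain ⟨T₁, hT₁⟩ := Filter.eventually_atBot.mp hev.1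
    obtain ⟨T₂, hT₂⟩ := Filter.eventually_atTop.mp hev.2
    filter_upwards [Filter.eventually_ge_atTop (max T₂ (max (-T₁) 0))] with t htge
    have ht0 : 0 ≤ t := le_trans (le_max_of_le_right (le_max_right _ _)) htge
    have hbound : ‖cfc g (a t)‖ ≤ δ / 2 := by
      refine norm_cfc_le (by positivity) fun x hx => ?_
      have habs := hspec t ht0 x hx
      have : ‖f x.re‖ < δ / 2 := by
        rcases le_or_gt 0 x.re with h | h
        · refine hT₂ x.re ?_
          have : t ≤ x.re := by rwa [abs_of_nonneg h] at habs
          exact le_trans (le_trans (le_max_left _ _) htge) this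
        · refine hT₁ x.re ?_
          have : t ≤ -x.re := by rwa [abs_of_neg h] at habs
          have h2 : -T₁ ≤ t := le_trans (le_max_of_le_right (le_max_left _ _)) htge
          linarith
      exact this.le
    rw [Real.dist_eq, sub_zero, abs_of_nonneg (norm_nonneg _)]
    linarith
end
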